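/- Let K ≥ 1, let p ≥ 1 be real, and let m ≥ 2 be an integer. Define F on ℝ^K by F(J)_i = J_i^m − J_i ∑_{j=1}^K J_j^{m−1} |J_j|^p, and let e_j be the j-th standard basis vector. Then F(−e_j) = 0 and F is Fréchet differentiable at −e_j, and: (1) if m is odd (m ≥ 3), the derivative of F at −e_j is a diagonal linear map with all diagonal entries negative, so the fully sparse configuration with one weight equal to −1 is linearly stable; (2) if m is even (m ≥ 2), the derivative of F at −e_j has a positive diagonal entry, so that configuration is linearly unstable. -/

import Mathlib

open Filter Topology

/-- Diagonal input correlations with `m = a + c ≥ 2`: the fully sparse configuration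
`-e_j` is an equilibrium of `F` with a diagonal Fréchet derivative; it is linearly
stable (all diagonal entries negative) when `m` is odd, and linearly unstable
(a positive diagonal entry) when `m` is even. -/
theorem stmt18 (K : ℕ) (hK : 1 ≤ K) (p : ℝ) (hp : 1 ≤ p)
    (m : ℕ) (hm : 2 ≤ m)
    (F : (Fin K → ℝ) → (Fin K → ℝ))
    (hF : F = fun J i => J i ^ m - J i * ∑ j, J j ^ (m - 1) * |J j| ^ p)
    (j : Fin K) :
    F (-Pi.single j 1) = 0 ∧
    ∃ d : Fin K → ℝ,
      HasFDerivAt (𝕜 := ℝ) F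
        (ContinuousLinearMap.pi fun i => d i • ContinuousLinearMap.proj i)
        (-Pi.single j 1) ∧
      (Odd m → ∀ i, d i < 0) ∧
      (Even m → ∃ i, 0 < d i) := by
  subst hF
  set J₀ : Fin K → ℝ := -Pi.single j 1 with hJ₀
  have hJ0 : ∀ k, J₀ k = if k = j then (-1:ℝ) else 0 := by
    intro k
    by_cases h : k = j <;> simp [hJ₀, Pi.single_apply, h]
  set q : ℝ := (-1) ^ (m - 1) with hq
  have hmm : m - 1 + 1 = m := by omega
  have hqm : (-1:ℝ) ^ m = -q := by rw [← hmm, pow_succ, hq]; ring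
  have hp0 : (0:ℝ) < p := lt_of_lt_of_le one_pos hp
  -- value of the sum at J₀
  have hS0 : ∑ k, (J₀ k) ^ (m - 1) * |J₀ k| ^ p = q := by
    rw [Finset.sum_eq_single j]
    · rw [hJ0 j]; simp [hq, Real.one_rpow]
    · intro k _ hk
      rw [hJ0 k, if_neg hk]
      simp [zero_pow (show m - 1 ≠ 0 by omega)]
    · simp
  -- derivative of g at 0
  have hg0 : HasDerivAt (fun x : ℝ => x ^ (m - 1) * |x| ^ p) 0 0 := by
    rw [hasDerivAt_iff_tendsto_slope]
    have hx : Tendsto (fun y : ℝ => y ^ (m - 2) * |y| ^ p) (𝓝 0) (𝓝 0) := by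
      have h1 : ContinuousAt (fun y : ℝ => y ^ (m - 2) * |y| ^ p) 0 := by
        exact (continuous_pow _).continuousAt.mul
          ((Real.continuousAt_rpow_const _ _ (Or.inr hp0.le)).comp
            continuous_abs.continuousAt)
      have h2 := h1.tendsto
      simpa [Real.zero_rpow hp0.ne'] using h2
    refine Tendsto.congr' ?_ (hx.mono_left nhdsWithin_le_nhds)
    filter_upwards [self_mem_nhdsWithin] with y hy
    have hy' : (y:ℝ) ≠ 0 := hy
    have hpow : y ^ (m - 1) = y ^ (m - 2) * y := by
      rw [← pow_succ]; congr 1; omega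
    rw [slope_def_field]
    field_simp [hpow, zero_pow (show m - 1 ≠ 0 by omega)]
    simp only [Real.zero_rpow hp0.ne', zero_pow (show m - 1 ≠ 0 by omega), mul_zero, sub_zero, hpow]
    ring
  -- derivative of g at -1
  have hneg2 : (-1:ℝ) ^ (m - 2) = -q := by
    have h : m - 2 + 1 = m - 1 := by omega
    rw [hq, ← h, pow_succ]; ring
  have habs : HasDerivAt (fun x : ℝ => |x| ^ p) (-p) (-1 : ℝ) := by
    have h1 : HasDerivAt (fun y : ℝ => y ^ p) (p * (- -1 : ℝ) ^ (p - 1)) (- -1 : ℝ) :=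
      Real.hasDerivAt_rpow_const (Or.inl (by norm_num))
    have h2 : HasDerivAt (fun x : ℝ => -x) (-1 : ℝ) (-1 : ℝ) := (hasDerivAt_id _).neg
    have h3 := h1.comp (-1 : ℝ) h2
    have h4 : HasDerivAt (fun x : ℝ => (-x) ^ p) (-p) (-1 : ℝ) := by
      exact h3.congr_deriv (by norm_num [Real.one_rpow])
    apply h4.congr_of_eventuallyEq
    filter_upwards [Iio_mem_nhds (by norm_num : (-1:ℝ) < 0)] with x hx
    rw [abs_of_neg hx]
  have hgneg1 : HasDerivAt (fun x : ℝ => x ^ (m - 1) * |x| ^ p)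
      ((↑(m - 1) + p) * (-q)) (-1 : ℝ) := by
    have h1 := (hasDerivAt_pow (m - 1) (-1 : ℝ)).mul habs
    refine h1.congr_deriv ?_
    have : m - 1 - 1 = m - 2 := by omega
    rw [this, hneg2]
    simp [hq, Real.one_rpow]
    ring
  -- per-index derivative of g at J₀ k
  set Dg : Fin K → ℝ := fun k => if k = j then (↑(m - 1) + p) * (-q) else 0 with hDg
  have hgd : ∀ k, HasDerivAt (fun x : ℝ => x ^ (m - 1) * |x| ^ p) (Dg k) (J₀ k) := by
    intro k
    rw [hJ0 k, hDg]
    by_cases h : k = j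
    · simpa [h] using hgneg1
    · simpa [h] using hg0
  set d : Fin K → ℝ := fun i => if i = j then p * (-q) else -q with hd
  set P : Fin K → ((Fin K → ℝ) →L[ℝ] ℝ) := fun k => ContinuousLinearMap.proj k with hP
  refine ⟨?_, d, ?_, ?_, ?_⟩
  · funext i
    show (J₀ i) ^ m - J₀ i * (∑ k, (J₀ k) ^ (m - 1) * |J₀ k| ^ p) = 0
    rw [hS0, hJ0 i]
    by_cases h : i = j
    · rw [if_pos h, hqm]; ring
    · rw [if_neg h]; simp [zero_pow (show m ≠ 0 by omega)]
  · apply hasFDerivAt_pi.2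
    intro i
    have hproji : HasFDerivAt (fun J : Fin K → ℝ => J i)
        (P i) J₀ := by
      exact hasFDerivAt_apply i J₀
    have hpowi : HasFDerivAt (fun J : Fin K → ℝ => J i ^ m)
        ((↑m * (J₀ i) ^ (m - 1)) • P i) J₀ :=
      (hasDerivAt_pow m (J₀ i)).comp_hasFDerivAt J₀ hproji
    have hsum : HasFDerivAt (fun J : Fin K → ℝ => ∑ k, J k ^ (m - 1) * |J k| ^ p)
        (∑ k, Dg k • P k) J₀ := by
      apply HasFDerivAt.fun_sum
      intro k _
      have hk : HasFDerivAt (fun J : Fin K → ℝ => J k) (P k) J₀ := hasFDerivAt_apply k J₀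
      exact (hgd k).comp_hasFDerivAt J₀ hk
    have hmain := hpowi.sub (hproji.mul hsum)
    have heq : (↑m * (J₀ i) ^ (m - 1)) • P i -
        (J₀ i • (∑ k, Dg k • P k) +
          (∑ k, (J₀ k) ^ (m - 1) * |J₀ k| ^ p) • P i) =
        (d i • P i) := by
      ext v
      simp only [ContinuousLinearMap.coe_sub', ContinuousLinearMap.coe_smul',
        ContinuousLinearMap.add_apply, ContinuousLinearMap.coe_sum', Pi.sub_apply,
        Pi.smul_apply, Finset.sum_apply, ContinuousLinearMap.proj_apply,
        ContinuousLinearMap.smul_apply, smul_eq_mul, hP]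
      rw [hS0, hJ0 i]
      have hsum2 : ∑ k, Dg k * v k = (↑(m - 1) + p) * (-q) * v j := by
        rw [hDg]
        simp only [ite_mul, zero_mul]
        rw [Finset.sum_ite_eq' Finset.univ j]
        simp
      rw [hsum2]
      simp only [hd]
      by_cases h : i = j
      · subst h
        simp only [if_pos rfl, hq, if_true]
        rw [show ((m - 1 : ℕ) : ℝ) = (m : ℝ) - 1 from by
          rw [Nat.cast_sub (show 1 ≤ m by omega)]; norm_num]
        ring
      · rw [if_neg h, if_neg h]
        simp [zero_pow (show m - 1 ≠ 0 by omega)]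
    rw [← heq]
    exact hmain
  · intro hodd i
    have hmo : Even (m - 1) := by
      rcases hodd with ⟨t, ht⟩; exact ⟨t, by omega⟩
    have hq1 : q = 1 := by rw [hq, hmo.neg_one_pow]
    simp only [hd, hq1]
    split_ifs
    · linarith
    · norm_num
  · intro heven
    have hmo : Odd (m - 1) := by
      rcases heven with ⟨t, ht⟩; exact ⟨t - 1, by omega⟩
    have hq1 : q = -1 := by rw [hq, hmo.neg_one_pow]
    exact ⟨j, by simp only [hd, hq1, if_pos rfl]; linarith⟩
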